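/- Suppose that either (1) (Poly-R₁) and HK^h_B hold, or (2) (Poly-∞) and HK^h_U hold, and suppose d₁ > α₂(β₂∧1), where d₁ is the lower volume-doubling exponent, α₂ the upper scaling index of Φ, and β₂ the upper index in (Poly-R₁). Then there exists a constant C≥1 such that for all x,y∈D, C^{−1} h(Φ(ρ(x,y)),x,y) ψ(ρ(x,y))/V(x,ρ(x,y)) ≤ G̃_D(x,y) ≤ C h(Φ(ρ(x,y)),x,y) ψ(ρ(x,y))/V(x,ρ(x,y)), where G̃_D(x,y):=∫_{Φ(ρ(x,y))}^{2Φ(diam D)} h(s,x,y)/( s V(x,Φ^{−1}(s)) φ(1/s) ) ds (with 2Φ(diam D) interpreted as ∞ when D is unbounded) and ψ(r):=1/φ(1/Φ(r)). -/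

import Mathlib

open MeasureTheory Real Set
open scoped ENNReal

/-- Tail of the Lévy measure: `w(r) = ν((r,∞))`. -/
noncomputable def levyTail (ν : Measure ℝ) (r : ℝ) : ℝ := (ν (Set.Ioi r)).toReal

/-- Laplace exponent `φ(λ) = ∫ (1 - e^{-λ s}) ν(ds)`. -/
noncomputable def laplaceExp (ν : Measure ℝ) (lam : ℝ) : ℝ :=
  ∫ s, (1 - Real.exp (-(lam * s))) ∂ν

/-- Condition (Poly-R₁); (Poly-∞) is the case `R₁ = ⊤`. -/
def PolyCond (ν : Measure ℝ) (R₁ : ℝ≥0∞) (c c' β₁ β₂ : ℝ) : Prop :=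
  ∀ r R : ℝ, 0 < r → r ≤ R → ENNReal.ofReal R < R₁ →
    c * (R / r) ^ β₁ ≤ levyTail ν r / levyTail ν R ∧
      levyTail ν r / levyTail ν R ≤ c' * (R / r) ^ β₂

/-- `ν` is the Lévy measure of a driftless subordinator. -/
structure IsLevyMeasure (ν : Measure ℝ) : Prop where
  supp : ν (Set.Iic 0) = 0
  tail_fin : ∀ r : ℝ, 0 < r → ν (Set.Ioi r) < ⊤
  integ : IntegrableOn (fun s => s) (Set.Ioc (0:ℝ) 1) ν

/-- `μ t` is the law of `S_t` for the driftless subordinator with Lévy measure `ν`. -/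
structure IsSubordinatorLaw (ν : Measure ℝ) (μ : ℝ → Measure ℝ) : Prop where
  levy : IsLevyMeasure ν
  prob : ∀ t : ℝ, 0 < t → IsProbabilityMeasure (μ t)
  nonneg : ∀ t : ℝ, 0 < t → μ t (Set.Iio 0) = 0
  laplace : ∀ t lam : ℝ, 0 < t → 0 ≤ lam →
    (∫ s, Real.exp (-(lam * s)) ∂(μ t)) = Real.exp (-(t * laplaceExp ν lam))

/-- `H(λ) = φ(λ) - λ φ'(λ)`. -/
noncomputable def Hfun (ν : Measure ℝ) (lam : ℝ) : ℝ :=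
  laplaceExp ν lam - lam * deriv (laplaceExp ν) lam

/-- `σ(t,s) = (φ')⁻¹(s/t)` if `s/t < φ'(0+)`, and `σ(t,s) = 0` otherwise. -/
def IsSigmaFun (ν : Measure ℝ) (σ : ℝ → ℝ → ℝ) : Prop :=
  ∀ t s : ℝ, 0 < t → 0 < s →
    ((∃ lam : ℝ, 0 < lam ∧ s / t < deriv (laplaceExp ν) lam) →
      0 < σ t s ∧ deriv (laplaceExp ν) (σ t s) = s / t) ∧
    ((∀ lam : ℝ, 0 < lam → deriv (laplaceExp ν) lam ≤ s / t) → σ t s = 0)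

/-- `φInv` is the inverse of the Laplace exponent `φ` on `(0,∞)`. -/
def IsPhiInv (ν : Measure ℝ) (φInv : ℝ → ℝ) : Prop :=
  ∀ u : ℝ, 0 < u → 0 < φInv u ∧ laplaceExp ν (φInv u) = u

/-- `HInv` is the inverse of `H` on `(0,∞)`. -/
def IsHInv (ν : Measure ℝ) (HInv : ℝ → ℝ) : Prop :=
  ∀ u : ℝ, 0 < u → 0 < HInv u ∧ Hfun ν (HInv u) = u

open Metric

/-- `V(x,r) = m(B(x,r))`. -/
noncomputable def vol {E : Type*} [PseudoMetricSpace E] [MeasurableSpace E] (m : Measure E) (x : E) (r : ℝ) : ℝ :=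
  (m (Metric.ball x r)).toReal

/-- Volume doubling and reverse doubling with exponents `d₁ ≤ d₂` and
localization radius `R_E`. -/
def VolDoubling {E : Type*} [PseudoMetricSpace E] [MeasurableSpace E] (m : Measure E) (R_E : ℝ≥0∞)
    (d₁ d₂ : ℝ) : Prop :=
  ∀ a : ℝ, 1 ≤ a → ∃ CV : ℝ, 1 ≤ CV ∧ ∀ (x : E) (r R : ℝ), 0 < r → r ≤ R →
    ENNReal.ofReal R < ENNReal.ofReal a * R_E →
    CV⁻¹ * (R / r) ^ d₁ ≤ vol m x R / vol m x r ∧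
      vol m x R / vol m x r ≤ CV * (R / r) ^ d₂

/-- Global weak scaling condition with indices `α₁ ≤ α₂`. -/
def WeakScaling (Φ : ℝ → ℝ) (c c' α₁ α₂ : ℝ) : Prop :=
  ∀ r R : ℝ, 0 < r → r ≤ R →
    c * (R / r) ^ α₁ ≤ Φ R / Φ r ∧ Φ R / Φ r ≤ c' * (R / r) ^ α₂

/-- `h` is a boundary function on `D`: it takes values in `[0,1]`, satisfies (H1)
(non-increasing in time) and (H2) with constant `cH` and exponent `γ` below the
time horizon `T` (`T = ⊤` for unbounded `D`). -/
def IsBoundaryFunction {E : Type*} (D : Set E) (h : ℝ → E → E → ℝ) (T : ℝ≥0∞)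
    (cH γ : ℝ) : Prop :=
  (∀ (t : ℝ) (x y : E), 0 < t → x ∈ D → y ∈ D → h t x y ∈ Set.Icc (0:ℝ) 1) ∧
  (∀ (x y : E), x ∈ D → y ∈ D → ∀ s t : ℝ, 0 < s → s ≤ t → h t x y ≤ h s x y) ∧
  (∀ (x y : E), x ∈ D → y ∈ D → ∀ s t : ℝ, 0 < s → s ≤ t → ENNReal.ofReal t < T →
    s ^ γ * h s x y ≤ cH * (t ^ γ * h t x y))

/-- Two-sided estimate (3.4) for the heat kernel `p_D` of `Y^D`, holding for all times
`t` with `0 < t` satisfying `tcond t`. -/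
def HKest {E : Type*} [PseudoMetricSpace E] [MeasurableSpace E] (m : Measure E) (D : Set E)
    (Ψ ΦInv : ℝ → ℝ) (h pD : ℝ → E → E → ℝ)
    (C₀ cl cexl cu cexu : ℝ) (tcond : ℝ → Prop) : Prop :=
  ∀ (t : ℝ) (x y : E), 0 < t → tcond t → x ∈ D → y ∈ D →
    cl * h t x y * min ((vol m x (ΦInv t))⁻¹)
        (C₀ * t / (vol m x (dist x y) * Ψ (dist x y)) +
          (vol m x (ΦInv t))⁻¹ * Real.exp (-(cexl * dist x y ^ 2 / ΦInv t ^ 2)))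
      ≤ pD t x y ∧
    pD t x y ≤ cu * h t x y * min ((vol m x (ΦInv t))⁻¹)
        (C₀ * t / (vol m x (dist x y) * Ψ (dist x y)) +
          (vol m x (ΦInv t))⁻¹ * Real.exp (-(cexu * dist x y ^ 2 / ΦInv t ^ 2)))

/-- Large-time estimate (3.5): `p_D(t,x,y) ≍ e^{-λ_D t} h(1,x,y)` for `t ≥ 1`. -/
def HKlarge {E : Type*} (D : Set E) (h pD : ℝ → E → E → ℝ) (lamD c₅ c₆ : ℝ) : Prop :=
  ∀ (t : ℝ) (x y : E), 1 ≤ t → x ∈ D → y ∈ D →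
    c₅ * Real.exp (-(lamD * t)) * h 1 x y ≤ pD t x y ∧
      pD t x y ≤ c₆ * Real.exp (-(lamD * t)) * h 1 x y

/-- Heat kernel `q(t,x,y) = ∫ p_D(s,x,y) P(S_t ∈ ds)` of the subordinate process. -/
noncomputable def subq {E : Type*} (μ : ℝ → Measure ℝ) (pD : ℝ → E → E → ℝ)
    (t : ℝ) (x y : E) : ℝ :=
  ∫ s, pD s x y ∂(μ t)

/-- Jump kernel `J(x,y) = ∫ p_D(s,x,y) ν(ds)` of the subordinate process. -/
noncomputable def subJ {E : Type*} (ν : Measure ℝ) (pD : ℝ → E → E → ℝ) (x y : E) : ℝ :=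
  ∫ s, pD s x y ∂ν

/-- Green function `G_D(x,y) = ∫_0^∞ q(t,x,y) dt` of the subordinate process. -/
noncomputable def subG {E : Type*} (μ : ℝ → Measure ℝ) (pD : ℝ → E → E → ℝ)
    (x y : E) : ℝ :=
  ∫ t in Set.Ioi (0:ℝ), subq μ pD t x y

/-- `ψ(r) = 1/φ(1/Φ(r))`. -/
noncomputable def psiFun (ν : Measure ℝ) (Φ : ℝ → ℝ) (r : ℝ) : ℝ :=
  (laplaceExp ν ((Φ r)⁻¹))⁻¹

/-- `𝔅_h(t,x,y) = ∫_{2/φ⁻¹(1/t)}^{4Φ(ρ(x,y))} h(s,x,y) w(s) ds`. -/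
noncomputable def sB {E : Type*} [PseudoMetricSpace E] [MeasurableSpace E] (ν : Measure ℝ)
    (h : ℝ → E → E → ℝ) (Φ φInv : ℝ → ℝ) (t : ℝ) (x y : E) : ℝ :=
  ∫ s in Set.Ioc (2 * (φInv (t⁻¹))⁻¹) (4 * Φ (dist x y)), h s x y * levyTail ν s

/-- Hypotheses of case (1): (Poly-R₁) holds and `HK^h_B` holds. -/
def BddCaseHyp {E : Type*} [PseudoMetricSpace E] [MeasurableSpace E] (m : Measure E) (D : Set E)
    (Φ Ψ ΦInv : ℝ → ℝ) (h pD : ℝ → E → E → ℝ) (ν : Measure ℝ)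
    (R₁ : ℝ≥0∞) (cw cw' β₁ β₂ cH γ C₀ cl cexl cu cexu : ℝ) : Prop :=
  PolyCond ν R₁ cw cw' β₁ β₂ ∧
  Bornology.IsBounded D ∧
  ENNReal.ofReal (8 * Φ (Metric.diam D)) < R₁ ∧
  IsBoundaryFunction D h (ENNReal.ofReal (4 * Φ (Metric.diam D) + 1)) cH γ ∧
  HKest m D Ψ ΦInv h pD C₀ cl cexl cu cexu (fun t => t ≤ 1) ∧
  ∃ lamD c₅ c₆ : ℝ, 0 < lamD ∧ 0 < c₅ ∧ 0 < c₆ ∧ HKlarge D h pD lamD c₅ c₆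

/-- Hypotheses of case (2): (Poly-∞) holds and `HK^h_U` holds (with `R_E = ⊤`). -/
def UnbddCaseHyp {E : Type*} [PseudoMetricSpace E] [MeasurableSpace E] (m : Measure E) (D : Set E)
    (Ψ ΦInv : ℝ → ℝ) (h pD : ℝ → E → E → ℝ) (ν : Measure ℝ)
    (R_E : ℝ≥0∞) (cw cw' β₁ β₂ cH γ C₀ cl cexl cu cexu : ℝ) : Prop :=
  PolyCond ν ⊤ cw cw' β₁ β₂ ∧
  R_E = ⊤ ∧
  IsBoundaryFunction D h ⊤ cH γ ∧
  HKest m D Ψ ΦInv h pD C₀ cl cexl cu cexu (fun _ => True)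

/-- On-diagonal expression `h(1/φ⁻¹(1/t),x,y) / V(x, ψ⁻¹(t))`. -/
noncomputable def onDiag {E : Type*} [PseudoMetricSpace E] [MeasurableSpace E] (m : Measure E)
    (h : ℝ → E → E → ℝ) (ΦInv φInv : ℝ → ℝ) (t : ℝ) (x y : E) : ℝ :=
  h ((φInv (t⁻¹))⁻¹) x y / vol m x (ΦInv ((φInv (t⁻¹))⁻¹))

/-- Off-diagonal expression in Theorem 4.2(ii), with constant `c` in the exponential. -/
noncomputable def offDiag {E : Type*} [PseudoMetricSpace E] [MeasurableSpace E] (ν : Measure ℝ)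
    (m : Measure E) (h : ℝ → E → E → ℝ) (Φ Ψ ΦInv φInv : ℝ → ℝ)
    (C₀ c t : ℝ) (x y : E) : ℝ :=
  C₀ / (vol m x (dist x y) * Ψ (dist x y)) *
      (t * sB ν h Φ φInv t x y + h ((φInv (t⁻¹))⁻¹) x y / φInv (t⁻¹)) +
    h ((φInv (t⁻¹))⁻¹) x y / vol m x (ΦInv ((φInv (t⁻¹))⁻¹)) *
      Real.exp (-(c * dist x y ^ 2 / ΦInv ((φInv (t⁻¹))⁻¹) ^ 2)) +
    h (Φ (dist x y)) x y * (t * levyTail ν (Φ (dist x y))) / vol m x (dist x y)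

set_option linter.unusedSectionVars false

section LaplaceBasics

variable {ν : Measure ℝ} (hsupp : ν (Set.Iic 0) = 0)
  (htail : ∀ r : ℝ, 0 < r → ν (Set.Ioi r) < ⊤)
  (hinteg : IntegrableOn (fun s => s) (Set.Ioc (0:ℝ) 1) ν)

include hsupp in
lemma levy_ae_pos : ∀ᵐ u ∂ν, 0 < u := by
  rw [ae_iff]
  convert hsupp using 2
  ext u; simp [not_lt]

/-- `1 - e^{-x} ≤ x` for all `x`. -/
lemma one_sub_exp_neg_le (x : ℝ) : 1 - Real.exp (-x) ≤ x := by
  have := Real.add_one_le_exp (-x)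
  linarith

lemma one_sub_exp_neg_nonneg {x : ℝ} (hx : 0 ≤ x) : 0 ≤ 1 - Real.exp (-x) := by
  have : Real.exp (-x) ≤ Real.exp 0 := Real.exp_le_exp.mpr (by linarith)
  simp only [Real.exp_zero] at this
  linarith

lemma one_sub_exp_neg_lt_one (x : ℝ) : 1 - Real.exp (-x) < 1 := by
  have := Real.exp_pos (-x); linarith

include hsupp in
lemma levy_restrict_pos : ν.restrict (Set.Ioi (0:ℝ)) = ν := by
  apply Measure.restrict_eq_self_of_ae_mem
  filter_upwards [levy_ae_pos hsupp] with u hu using hu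

include hsupp htail hinteg in
lemma laplace_kernel_integrable {lam : ℝ} (hlam : 0 < lam) :
    Integrable (fun u => 1 - Real.exp (-(lam * u))) ν := by
  have hres := levy_restrict_pos hsupp
  have hmeas : Measurable (fun u : ℝ => 1 - Real.exp (-(lam * u))) := by
    fun_prop
  rw [← hres]
  have hsplit : Set.Ioi (0:ℝ) = Set.Ioc 0 1 ∪ Set.Ioi 1 := by
    rw [Set.Ioc_union_Ioi_eq_Ioi]; norm_num
  rw [show (Integrable (fun u => 1 - Real.exp (-(lam * u))) (ν.restrict (Set.Ioi 0)))
      = IntegrableOn (fun u => 1 - Real.exp (-(lam * u))) (Set.Ioi 0) ν from rfl, hsplit]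
  apply IntegrableOn.union
  · -- on (0,1]: dominated by lam * u
    have h1 : IntegrableOn (fun u : ℝ => lam * u) (Set.Ioc 0 1) ν := hinteg.const_mul lam
    apply Integrable.mono h1 hmeas.aestronglyMeasurable.restrict
    rw [ae_restrict_iff' measurableSet_Ioc]
    filter_upwards with u hu
    have hu0 : 0 ≤ lam * u := le_of_lt (mul_pos hlam hu.1)
    rw [Real.norm_eq_abs, Real.norm_eq_abs, abs_of_nonneg (one_sub_exp_neg_nonneg hu0),
      abs_of_nonneg hu0]
    exact one_sub_exp_neg_le _
  · -- on (1,∞): bounded by 1, finite measure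
    have hfin : ν (Set.Ioi (1:ℝ)) < ⊤ := htail 1 one_pos
    have h1 : IntegrableOn (fun _ : ℝ => (1:ℝ)) (Set.Ioi 1) ν :=
      integrableOn_const hfin.ne
    apply Integrable.mono h1 hmeas.aestronglyMeasurable.restrict
    rw [ae_restrict_iff' measurableSet_Ioi]
    filter_upwards with u hu
    have hu0 : (0:ℝ) < u := lt_trans one_pos hu
    rw [Real.norm_eq_abs, norm_one, abs_of_nonneg (one_sub_exp_neg_nonneg (by positivity))]
    have := one_sub_exp_neg_lt_one (lam * u)
    linarith

include hsupp htail hinteg in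
lemma laplace_nonneg {lam : ℝ} (hlam : 0 ≤ lam) : 0 ≤ laplaceExp ν lam := by
  apply integral_nonneg_of_ae
  filter_upwards [levy_ae_pos hsupp] with u hu
  exact one_sub_exp_neg_nonneg (by positivity)

include hsupp htail hinteg in
lemma laplace_mono {lam lam' : ℝ} (hlam : 0 < lam) (h : lam ≤ lam') :
    laplaceExp ν lam ≤ laplaceExp ν lam' := by
  apply integral_mono_ae (laplace_kernel_integrable hsupp htail hinteg hlam)
    (laplace_kernel_integrable hsupp htail hinteg (lt_of_lt_of_le hlam h))
  filter_upwards [levy_ae_pos hsupp] with u hu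
  have : Real.exp (-(lam' * u)) ≤ Real.exp (-(lam * u)) := by
    apply Real.exp_le_exp.mpr
    nlinarith
  linarith

include hsupp htail hinteg in
lemma laplace_pos (hne : ν (Set.Ioi (0:ℝ)) ≠ 0) {lam : ℝ} (hlam : 0 < lam) :
    0 < laplaceExp ν lam := by
  rw [laplaceExp]
  rw [integral_pos_iff_support_of_nonneg_ae]
  · apply lt_of_lt_of_le (lt_of_le_of_ne zero_le (Ne.symm hne))
    apply measure_mono
    intro u hu
    simp only [Function.mem_support]
    have : Real.exp (-(lam * u)) < 1 := by
      rw [Real.exp_lt_one_iff]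
      have : (0:ℝ) < u := hu
      nlinarith
    intro hc; rw [Set.mem_Ioi] at hu; nlinarith [Real.exp_pos (-(lam*u))]
  · filter_upwards [levy_ae_pos hsupp] with u hu
    exact one_sub_exp_neg_nonneg (by positivity)
  · exact laplace_kernel_integrable hsupp htail hinteg hlam

/-- Pointwise slope inequality: for `0 < a ≤ b`, `a(1-e^{-b}) ≤ b(1-e^{-a})`. -/
lemma slope_pointwise {a b : ℝ} (ha : 0 < a) (hab : a ≤ b) :
    a * (1 - Real.exp (-b)) ≤ b * (1 - Real.exp (-a)) := by
  set c := 1 - Real.exp (-a) with hc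
  have key : MonotoneOn (fun x : ℝ => x * c - a * (1 - Real.exp (-x))) (Set.Ici a) := by
    apply monotoneOn_of_deriv_nonneg (convex_Ici a)
    · fun_prop
    · intro x hx
      apply DifferentiableAt.differentiableWithinAt
      fun_prop
    · intro x hx
      rw [interior_Ici] at hx
      have hd : HasDerivAt (fun x : ℝ => x * c - a * (1 - Real.exp (-x)))
          (c - a * Real.exp (-x)) x := by
        have h1 : HasDerivAt (fun x : ℝ => x * c) c x := by
          simpa using (hasDerivAt_id x).mul_const c
        have h2 : HasDerivAt (fun x : ℝ => Real.exp (-x)) (-Real.exp (-x)) x := by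
          simpa [Function.comp_def] using (Real.hasDerivAt_exp (-x)).comp x (hasDerivAt_neg x)
        have h3 : HasDerivAt (fun x : ℝ => a * (1 - Real.exp (-x))) (a * Real.exp (-x)) x := by
          simpa using (((hasDerivAt_const x (1:ℝ)).sub h2).const_mul a)
        exact h1.sub h3
      rw [hd.deriv]
      have hax : a < x := hx
      have h4 : Real.exp (-x) ≤ Real.exp (-a) := Real.exp_le_exp.mpr (by linarith)
      have h5 : (1 + a) * Real.exp (-a) ≤ 1 := by
        have := Real.add_one_le_exp a
        have hea := Real.exp_pos a
        rw [Real.exp_neg]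
        rw [mul_inv_le_iff₀ hea]
        linarith
      have h6 : a * Real.exp (-x) ≤ a * Real.exp (-a) := by
        apply mul_le_mul_of_nonneg_left h4 ha.le
      have hea' := Real.exp_pos (-a)
      simp only [hc]
      nlinarith
  have := key (Set.self_mem_Ici) (Set.mem_Ici.mpr hab) hab
  simp only at this
  nlinarith

include hsupp htail hinteg in
/-- `φ(λ)/λ` is non-increasing: for `0 < μ ≤ λ`, `μ φ(λ) ≤ λ φ(μ)`. -/
lemma laplace_slope {mu lam : ℝ} (hmu : 0 < mu) (h : mu ≤ lam) :
    mu * laplaceExp ν lam ≤ lam * laplaceExp ν mu := by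
  have hlam : 0 < lam := lt_of_lt_of_le hmu h
  rw [laplaceExp, laplaceExp, ← integral_const_mul, ← integral_const_mul]
  apply integral_mono_ae
    ((laplace_kernel_integrable hsupp htail hinteg hlam).const_mul mu)
    ((laplace_kernel_integrable hsupp htail hinteg hmu).const_mul lam)
  filter_upwards [levy_ae_pos hsupp] with u hu
  have h1 : mu * u ≤ lam * u := by nlinarith
  have := slope_pointwise (mul_pos hmu hu) h1
  calc mu * (1 - Real.exp (-(lam * u)))
      = (mu * u) * (1 - Real.exp (-(lam * u))) / u := by field_simp
    _ ≤ (lam * u) * (1 - Real.exp (-(mu * u))) / u := by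
        gcongr
    _ = lam * (1 - Real.exp (-(mu * u))) := by field_simp

include hsupp htail hinteg in
/-- Easy tail bound: `(1 - e⁻¹) w(r) ≤ φ(1/r)`. -/
lemma tail_le_laplace {r : ℝ} (hr : 0 < r) :
    (1 - Real.exp (-1)) * levyTail ν r ≤ laplaceExp ν r⁻¹ := by
  have hint := laplace_kernel_integrable hsupp htail hinteg (inv_pos.mpr hr)
  have h1 : laplaceExp ν r⁻¹ ≥ ∫ u in Set.Ioi r, (1 - Real.exp (-(r⁻¹ * u))) ∂ν := by
    apply setIntegral_le_integral hint
    filter_upwards [levy_ae_pos hsupp] with u hu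
    exact one_sub_exp_neg_nonneg (by positivity)
  refine le_trans ?_ h1
  rw [levyTail]
  apply setIntegral_ge_of_const_le_real measurableSet_Ioi (htail r hr).ne
  · intro u hu
    have : (1:ℝ) ≤ r⁻¹ * u := by
      rw [Set.mem_Ioi] at hu
      rw [le_inv_mul_iff₀ hr]
      linarith
    have := Real.exp_le_exp.mpr (neg_le_neg this)
    linarith
  · exact hint.integrableOn

include hsupp htail hinteg in
/-- Hard bound: under a polynomial tail bound with exponent `β₂ < 1`,
`φ(1/R) ≤ (1 + cw'/(1-β₂)) w(R)`. -/
lemma laplace_le_tail {R cw' b2 : ℝ} (hR : 0 < R) (hb2 : 0 < b2) (hb21 : b2 < 1)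
    (hcw' : 0 < cw')
    (hP : ∀ t : ℝ, 0 < t → t ≤ R → levyTail ν t ≤ cw' * (R/t)^b2 * levyTail ν R) :
    laplaceExp ν R⁻¹ ≤ (1 + cw'/(1-b2)) * levyTail ν R := by
  have hRinv : (0:ℝ) < R⁻¹ := inv_pos.mpr hR
  have hb21' : (0:ℝ) < 1 - b2 := by linarith
  have hker := laplace_kernel_integrable hsupp htail hinteg hRinv
  -- integrability of id on Ioc 0 R
  have hid : IntegrableOn (fun u : ℝ => u) (Set.Ioc 0 R) ν := by
    rcases le_or_gt R 1 with hR1 | hR1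
    · exact hinteg.mono_set (Set.Ioc_subset_Ioc_right hR1)
    · have hsp : Set.Ioc (0:ℝ) R = Set.Ioc 0 1 ∪ Set.Ioc 1 R :=
        (Set.Ioc_union_Ioc_eq_Ioc (by norm_num) hR1.le).symm
      rw [hsp]
      apply hinteg.union
      have hfin : ν (Set.Ioc 1 R) < ⊤ :=
        lt_of_le_of_lt (measure_mono Set.Ioc_subset_Ioi_self) (htail 1 one_pos)
      apply Integrable.mono (integrableOn_const hfin.ne : IntegrableOn (fun _ : ℝ => R) _ ν)
        measurable_id.aestronglyMeasurable.restrict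
      rw [ae_restrict_iff' measurableSet_Ioc]
      filter_upwards with u hu
      simp only [id_eq, Real.norm_eq_abs, abs_of_pos hR,
        abs_of_nonneg (lt_trans one_pos hu.1).le]
      exact hu.2
  -- the key layercake estimate
  have wnn : 0 ≤ levyTail ν R := ENNReal.toReal_nonneg
  have key : ∫ u in Set.Ioc (0:ℝ) R, u ∂ν ≤ cw' * levyTail ν R * R / (1-b2) := by
    have hnn : 0 ≤ᵐ[ν.restrict (Set.Ioc 0 R)] (fun u : ℝ => u) :=
      Filter.eventually_of_mem (self_mem_ae_restrict measurableSet_Ioc)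
        (fun u hu => hu.1.le)
    have e1 : ENNReal.ofReal (∫ u in Set.Ioc (0:ℝ) R, u ∂ν)
        = ∫⁻ u in Set.Ioc (0:ℝ) R, ENNReal.ofReal u ∂ν :=
      ofReal_integral_eq_lintegral_ofReal hid hnn
    have e2 : (∫⁻ u in Set.Ioc (0:ℝ) R, ENNReal.ofReal u ∂ν)
        = ∫⁻ t in Set.Ioi (0:ℝ), (ν.restrict (Set.Ioc 0 R)) {a : ℝ | t < a} :=
      lintegral_eq_lintegral_meas_lt _ hnn measurable_id.aemeasurable
    set g : ℝ → ℝ := fun t => (cw' * levyTail ν R * R ^ b2) * t ^ (-b2) with hg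
    have hgnn : ∀ t ∈ Set.Ioo (0:ℝ) R, 0 ≤ g t := by
      intro t ht
      have h0 : (0:ℝ) < t ^ (-b2) := Real.rpow_pos_of_pos ht.1 _
      positivity
    have e3 : (∫⁻ t in Set.Ioi (0:ℝ), (ν.restrict (Set.Ioc 0 R)) {a : ℝ | t < a})
        ≤ ∫⁻ t in Set.Ioo (0:ℝ) R, ENNReal.ofReal (g t) := by
      have step : (∫⁻ t in Set.Ioi (0:ℝ), (ν.restrict (Set.Ioc 0 R)) {a : ℝ | t < a})
          ≤ ∫⁻ t in Set.Ioi (0:ℝ),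
              (Set.Ioo (0:ℝ) R).indicator (fun t => ENNReal.ofReal (g t)) t := by
        apply lintegral_mono_ae
        rw [ae_restrict_iff' measurableSet_Ioi]
        filter_upwards with t ht0
        rw [Set.mem_Ioi] at ht0
        have hset : {a : ℝ | t < a} = Set.Ioi t := rfl
        rw [hset, Measure.restrict_apply measurableSet_Ioi]
        rcases le_or_gt R t with hRt | hRt
        · have hemp : Set.Ioi t ∩ Set.Ioc 0 R = ∅ := by
            ext a
            simp only [Set.mem_inter_iff, Set.mem_Ioi, Set.mem_Ioc, Set.mem_empty_iff_false,
              iff_false]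
            rintro ⟨h1, _, h3⟩; linarith
          simp [hemp]
        · have ht : t ∈ Set.Ioo (0:ℝ) R := ⟨ht0, hRt⟩
          rw [Set.indicator_of_mem ht]
          calc ν (Set.Ioi t ∩ Set.Ioc 0 R) ≤ ν (Set.Ioi t) :=
                measure_mono Set.inter_subset_left
            _ = ENNReal.ofReal (levyTail ν t) := by
                rw [levyTail, ENNReal.ofReal_toReal (htail t ht0).ne]
            _ ≤ ENNReal.ofReal (g t) := by
                apply ENNReal.ofReal_le_ofReal
                refine le_trans (hP t ht0 hRt.le) (le_of_eq ?_)
                simp only [hg]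
                rw [Real.div_rpow hR.le ht0.le, Real.rpow_neg ht0.le, div_eq_mul_inv]
                ring
      refine step.trans (le_of_eq ?_)
      rw [lintegral_indicator measurableSet_Ioo, Measure.restrict_restrict measurableSet_Ioo]
      congr 1
      rw [Set.inter_eq_left.mpr]
      intro t ht; exact ht.1
    have hgint : IntegrableOn g (Set.Ioo (0:ℝ) R) := by
      have h2 := intervalIntegral.intervalIntegrable_rpow' (a := 0) (b := R)
        (by linarith : (-1:ℝ) < -b2)
      rw [intervalIntegrable_iff_integrableOn_Ioo_of_le hR.le] at h2
      exact h2.const_mul _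
    have e4 : (∫⁻ t in Set.Ioo (0:ℝ) R, ENNReal.ofReal (g t))
        = ENNReal.ofReal (∫ t in Set.Ioo (0:ℝ) R, g t) := by
      refine (ofReal_integral_eq_lintegral_ofReal hgint ?_).symm
      exact Filter.eventually_of_mem (self_mem_ae_restrict measurableSet_Ioo)
        (fun t ht => hgnn t ht)
    have e5 : ∫ t in Set.Ioo (0:ℝ) R, g t = cw' * levyTail ν R * R / (1-b2) := by
      simp only [hg]
      rw [MeasureTheory.integral_const_mul, ← integral_Ioc_eq_integral_Ioo,
        ← intervalIntegral.integral_of_le hR.le,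
        integral_rpow (Or.inl (by linarith : (-1:ℝ) < -b2))]
      have hRR : R ^ b2 * R ^ (-b2 + 1) = R := by
        rw [← Real.rpow_add hR]
        norm_num
      have hne : -b2 + 1 ≠ 0 := by linarith
      rw [Real.zero_rpow hne, sub_zero]
      calc cw' * levyTail ν R * R ^ b2 * (R ^ (-b2 + 1) / (-b2 + 1))
          = cw' * levyTail ν R * (R ^ b2 * R ^ (-b2 + 1)) / (-b2 + 1) := by ring
        _ = cw' * levyTail ν R * R / (1 - b2) := by rw [hRR]; ring_nf
    have final := le_trans (le_of_eq (e1.trans e2)) (e3.trans_eq (e4.trans (by rw [e5])))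
    rwa [ENNReal.ofReal_le_ofReal_iff (by positivity)] at final
  -- split the Laplace exponent
  have hres := levy_restrict_pos hsupp
  have hsplit : Set.Ioi (0:ℝ) = Set.Ioc 0 R ∪ Set.Ioi R := by
    rw [Set.Ioc_union_Ioi_eq_Ioi hR.le]
  have hdisj : Disjoint (Set.Ioc (0:ℝ) R) (Set.Ioi R) := Set.Ioc_disjoint_Ioi le_rfl
  have heq : laplaceExp ν R⁻¹
      = (∫ u in Set.Ioc (0:ℝ) R, (1 - Real.exp (-(R⁻¹ * u))) ∂ν)
        + ∫ u in Set.Ioi R, (1 - Real.exp (-(R⁻¹ * u))) ∂ν := by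
    have e0 : laplaceExp ν R⁻¹ = ∫ u in Set.Ioi (0:ℝ), (1 - Real.exp (-(R⁻¹ * u))) ∂ν := by
      rw [laplaceExp]; conv_lhs => rw [← hres]
    rw [e0, hsplit, setIntegral_union hdisj measurableSet_Ioi hker.integrableOn hker.integrableOn]
  have h2 : (∫ u in Set.Ioi R, (1 - Real.exp (-(R⁻¹ * u))) ∂ν) ≤ levyTail ν R := by
    have hfin : ν (Set.Ioi R) < ⊤ := htail R hR
    calc (∫ u in Set.Ioi R, (1 - Real.exp (-(R⁻¹ * u))) ∂ν)
        ≤ ∫ _ in Set.Ioi R, (1:ℝ) ∂ν := by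
          apply setIntegral_mono_on hker.integrableOn
            (integrableOn_const hfin.ne) measurableSet_Ioi
          intro u hu
          have := Real.exp_pos (-(R⁻¹ * u))
          linarith
      _ = levyTail ν R := by
          rw [setIntegral_const, smul_eq_mul, mul_one]; rfl
  have h3 : (∫ u in Set.Ioc (0:ℝ) R, (1 - Real.exp (-(R⁻¹ * u))) ∂ν)
      ≤ R⁻¹ * ∫ u in Set.Ioc (0:ℝ) R, u ∂ν := by
    rw [← MeasureTheory.integral_const_mul]
    apply setIntegral_mono_on hker.integrableOn (hid.const_mul R⁻¹) measurableSet_Ioc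
    intro u hu
    exact one_sub_exp_neg_le (R⁻¹ * u)
  have h4 : R⁻¹ * (cw' * levyTail ν R * R / (1-b2)) = cw'/(1-b2) * levyTail ν R := by
    field_simp
  calc laplaceExp ν R⁻¹ ≤ (R⁻¹ * ∫ u in Set.Ioc (0:ℝ) R, u ∂ν) + levyTail ν R := by
        rw [heq]; exact add_le_add h3 h2
    _ ≤ R⁻¹ * (cw' * levyTail ν R * R / (1-b2)) + levyTail ν R := by
        apply add_le_add_left
        exact mul_le_mul_of_nonneg_left key (le_of_lt hRinv)
    _ = (1 + cw'/(1-b2)) * levyTail ν R := by rw [h4]; ring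

end LaplaceBasics

/-- Core two-sided estimate for the tail Green function integral. -/
lemma green_core {E : Type*} [PseudoMetricSpace E] [MeasurableSpace E]
    (m : Measure E) (x y : E) (ν : Measure ℝ)
    (h : ℝ → E → E → ℝ) (ΦInv : ℝ → ℝ)
    (a : ℝ) (ρ : ℝ) (S : Set ℝ) (hSmeas : MeasurableSet S)
    (ha : 0 < a)
    (hSsub : S ⊆ Set.Ioi a) (hSsup : Set.Ioc a (2*a) ⊆ S)
    (q β δ CV cV2 cA' cφ cH2 : ℝ)
    (hq : 0 < q) (hβ : 0 ≤ β) (hδ : δ = q - β) (hδpos : 0 < δ)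
    (hCV : 1 ≤ CV) (hcV2 : 0 < cV2) (hcA' : 0 < cA') (hcφ : 0 < cφ) (hcH2 : 0 < cH2)
    (Vρpos : 0 < vol m x ρ)
    (φapos : 0 < laplaceExp ν a⁻¹)
    (hφmono : ∀ s : ℝ, a < s → laplaceExp ν s⁻¹ ≤ laplaceExp ν a⁻¹)
    (hφpos : ∀ s : ℝ, a < s → 0 < laplaceExp ν s⁻¹)
    (hVpos : ∀ s : ℝ, a < s → 0 < vol m x (ΦInv s))
    (hh0 : ∀ s : ℝ, a < s → 0 ≤ h s x y)
    (hhmono : ∀ s : ℝ, a < s → h s x y ≤ h a x y)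
    (hha : 0 ≤ h a x y)
    (hhlow : h a x y ≤ cH2 * h (2*a) x y)
    (hhanti : ∀ s : ℝ, a < s → s ≤ 2*a → h (2*a) x y ≤ h s x y)
    (hVolUp : ∀ s ∈ Set.Ioc a (2*a), vol m x (ΦInv s) ≤ cV2 * vol m x ρ)
    (hVolLow : ∀ s ∈ S, CV⁻¹ * (s/(cA'*a))^q * vol m x ρ ≤ vol m x (ΦInv s))
    (hPhiLow : ∀ s ∈ S, cφ * (a/s)^β * laplaceExp ν a⁻¹ ≤ laplaceExp ν s⁻¹)
    (hFmeas : AEStronglyMeasurable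
      (fun s => h s x y / (s * vol m x (ΦInv s) * laplaceExp ν s⁻¹)) (volume.restrict S)) :
      (max 1 (max (2 * cH2 * cV2) (CV * cA'^q / cφ / δ)))⁻¹ *
          (h a x y * (laplaceExp ν a⁻¹)⁻¹ / vol m x ρ)
        ≤ (∫ s in S, h s x y / (s * vol m x (ΦInv s) * laplaceExp ν s⁻¹)) ∧
      (∫ s in S, h s x y / (s * vol m x (ΦInv s) * laplaceExp ν s⁻¹))
        ≤ (max 1 (max (2 * cH2 * cV2) (CV * cA'^q / cφ / δ))) *
          (h a x y * (laplaceExp ν a⁻¹)⁻¹ / vol m x ρ) := by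
  set φa := laplaceExp ν a⁻¹ with hφa
  set Vρ := vol m x ρ with hVρ
  set M := h a x y * φa⁻¹ / Vρ with hM
  have hM0 : 0 ≤ M := by positivity
  set F := fun s : ℝ => h s x y / (s * vol m x (ΦInv s) * laplaceExp ν s⁻¹) with hF
  set c₂ := CV * cA'^q / cφ with hc2
  have hcA'q : (0:ℝ) < cA'^q := Real.rpow_pos_of_pos hcA' q
  have hCV0 : (0:ℝ) < CV := lt_of_lt_of_le one_pos hCV
  have hc2pos : 0 < c₂ := by positivity
  set c₁ := 2 * cH2 * cV2 with hc1
  have hc1pos : 0 < c₁ := by positivity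
  have hdenpos : ∀ s : ℝ, a < s → 0 < s * vol m x (ΦInv s) * laplaceExp ν s⁻¹ := by
    intro s hs
    have h1 := hVpos s hs; have h2 := hφpos s hs; have h3 : (0:ℝ) < s := ha.trans hs
    positivity
  have hFnn : ∀ s : ℝ, a < s → 0 ≤ F s := by
    intro s hs
    exact div_nonneg (hh0 s hs) (hdenpos s hs).le
  -- upper pointwise bound
  have hupp : ∀ s ∈ S, F s ≤ c₂ * M * (a^δ * s^(-1-δ)) := by
    intro s hs
    have hsa : a < s := hSsub hs
    have hs0 : (0:ℝ) < s := ha.trans hsa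
    have hVs := hVpos s hsa
    have hφs := hφpos s hsa
    have hAs : (0:ℝ) < s/(cA'*a) := by positivity
    have hts : (0:ℝ) < a/s := by positivity
    have hAq : (0:ℝ) < (s/(cA'*a))^q := Real.rpow_pos_of_pos hAs q
    have hB : (0:ℝ) < (a/s)^β := Real.rpow_pos_of_pos hts β
    have hD : (0:ℝ) < (a/s)^δ := Real.rpow_pos_of_pos hts δ
    have h1 : F s ≤ h a x y /
        (s * (CV⁻¹ * (s/(cA'*a))^q * Vρ) * (cφ * (a/s)^β * φa)) := by
      apply div_le_div₀ (hha) (hhmono s hsa) (by positivity)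
      have e1 := hVolLow s hs
      have e2 := hPhiLow s hs
      have hp1 : (0:ℝ) ≤ CV⁻¹ * (s/(cA'*a))^q * Vρ := by positivity
      have hp2 : (0:ℝ) ≤ cφ * (a/s)^β * φa := by positivity
      calc s * (CV⁻¹ * (s/(cA'*a))^q * Vρ) * (cφ * (a/s)^β * φa)
          ≤ s * vol m x (ΦInv s) * (cφ * (a/s)^β * φa) := by
            apply mul_le_mul_of_nonneg_right _ hp2
            exact mul_le_mul_of_nonneg_left e1 hs0.le
        _ ≤ s * vol m x (ΦInv s) * laplaceExp ν s⁻¹ := by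
            apply mul_le_mul_of_nonneg_left e2 (by positivity)
    refine h1.trans (le_of_eq ?_)
    have hkey : (s/(cA'*a))^q * ((a/s)^β * (a/s)^δ) = (cA'^q)⁻¹ := by
      rw [← Real.rpow_add hts, show β + δ = q by rw [hδ]; ring,
        ← Real.mul_rpow hAs.le hts.le,
        show s/(cA'*a) * (a/s) = cA'⁻¹ by field_simp,
        Real.inv_rpow hcA'.le]
    have hAqe : (s/(cA'*a))^q = (cA'^q)⁻¹ / ((a/s)^β * (a/s)^δ) := by
      rw [eq_div_iff (by positivity), ← hkey]
      all_goals ring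
    have hsd : s^(-1-δ) = (a/s)^δ / (a^δ * s) := by
      have had : (0:ℝ) < a^δ := Real.rpow_pos_of_pos ha δ
      have hsδ : (0:ℝ) < s^δ := Real.rpow_pos_of_pos hs0 δ
      rw [show (-1-δ : ℝ) = -(δ+1) by ring, Real.rpow_neg hs0.le,
        Real.rpow_add hs0, Real.rpow_one, Real.div_rpow ha.le hs0.le]
      field_simp
      all_goals ring
    rw [hAqe, hsd, hM, hc2]
    have hφane : φa ≠ 0 := ne_of_gt φapos
    have hVρne : Vρ ≠ 0 := ne_of_gt Vρpos
    have hane : a ≠ 0 := ne_of_gt ha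
    have hsne : s ≠ 0 := ne_of_gt hs0
    have hCVne : CV ≠ 0 := ne_of_gt hCV0
    have hcφne : cφ ≠ 0 := ne_of_gt hcφ
    have hBne : ((a/s):ℝ)^β ≠ 0 := ne_of_gt hB
    have hDne : ((a/s):ℝ)^δ ≠ 0 := ne_of_gt hD
    have hAqne : (cA'^q : ℝ) ≠ 0 := ne_of_gt hcA'q
    have hadne : (a^δ : ℝ) ≠ 0 := ne_of_gt (Real.rpow_pos_of_pos ha δ)
    field_simp
  -- lower pointwise bound
  have hlow : ∀ s ∈ Set.Ioc a (2*a), M / (c₁ * a) ≤ F s := by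
    intro s hs
    obtain ⟨hs1, hs2⟩ := hs
    have hs0 : (0:ℝ) < s := ha.trans hs1
    have hVs := hVpos s hs1
    have hφs := hφpos s hs1
    have hnum : h a x y / cH2 ≤ h s x y := by
      rw [div_le_iff₀ hcH2]
      calc h a x y ≤ cH2 * h (2*a) x y := hhlow
        _ ≤ cH2 * h s x y := by
            apply mul_le_mul_of_nonneg_left (hhanti s hs1 hs2) hcH2.le
        _ = h s x y * cH2 := by ring
    have hden : s * vol m x (ΦInv s) * laplaceExp ν s⁻¹ ≤ (2*a) * (cV2 * Vρ) * φa := by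
      have e1 : s * vol m x (ΦInv s) ≤ (2*a) * (cV2 * Vρ) := by
        apply mul_le_mul hs2 (hVolUp s ⟨hs1, hs2⟩) hVs.le (by positivity)
      calc s * vol m x (ΦInv s) * laplaceExp ν s⁻¹
          ≤ s * vol m x (ΦInv s) * φa := by
            apply mul_le_mul_of_nonneg_left (hφmono s hs1) (by positivity)
        _ ≤ (2*a) * (cV2 * Vρ) * φa := by
            apply mul_le_mul_of_nonneg_right e1 φapos.le
    have hFge : (h a x y / cH2) / ((2*a) * (cV2 * Vρ) * φa) ≤ F s :=
      div_le_div₀ (hh0 s hs1) hnum (hdenpos s hs1) hden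
    refine le_trans (le_of_eq ?_) hFge
    have hφane : φa ≠ 0 := ne_of_gt φapos
    have hVρne : Vρ ≠ 0 := ne_of_gt Vρpos
    have hd1 : (0:ℝ) < c₁ * a := by positivity
    have hd2 : (0:ℝ) < (2*a) * (cV2 * Vρ) * φa := by positivity
    rw [div_eq_div_iff (ne_of_gt hd1) (ne_of_gt hd2), hM, hc1]
    field_simp
    all_goals ring
  -- integrability of the majorant
  have hmaj0 : IntegrableOn (fun s : ℝ => s^(-1-δ)) (Set.Ioi a) :=
    integrableOn_Ioi_rpow_of_lt (by linarith) ha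
  have hmaj : IntegrableOn (fun s : ℝ => c₂ * M * (a^δ * s^(-1-δ))) (Set.Ioi a) :=
    ((hmaj0.const_mul (a^δ)).const_mul (c₂ * M))
  have hmajnn : ∀ s : ℝ, a < s → 0 ≤ c₂ * M * (a^δ * s^(-1-δ)) := by
    intro s hsa
    have hs0 : (0:ℝ) < s := ha.trans hsa
    have := Real.rpow_pos_of_pos hs0 (-1-δ)
    have := Real.rpow_pos_of_pos ha δ
    positivity
  have hFint : IntegrableOn F S := by
    apply Integrable.mono (hmaj.mono_set hSsub) hFmeas
    rw [ae_restrict_iff' hSmeas]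
    filter_upwards with s hs
    have hsa : a < s := hSsub hs
    rw [Real.norm_eq_abs, Real.norm_eq_abs, abs_of_nonneg (hFnn s hsa),
      abs_of_nonneg (hmajnn s hsa)]
    exact hupp s hs
  -- upper bound for the integral
  have hval : ∫ s in Set.Ioi a, (fun s : ℝ => c₂ * M * (a^δ * s^(-1-δ))) s
      = c₂ * M / δ := by
    rw [MeasureTheory.integral_const_mul, MeasureTheory.integral_const_mul,
      integral_Ioi_rpow_of_lt (by linarith) ha]
    rw [show (-1-δ+1 : ℝ) = -δ by ring]
    rw [show (-(a^(-δ:ℝ))/(-δ) : ℝ) = a^(-δ:ℝ)/δ by rw [neg_div_neg_eq]]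
    rw [show a^δ * (a^(-δ:ℝ)/δ) = a^δ * a^(-δ:ℝ)/δ by ring, ← Real.rpow_add ha]
    norm_num
    all_goals ring
  have hIle : (∫ s in S, F s) ≤ c₂ / δ * M := by
    calc (∫ s in S, F s) ≤ ∫ s in S, c₂ * M * (a^δ * s^(-1-δ)) :=
          setIntegral_mono_on hFint (hmaj.mono_set hSsub) hSmeas hupp
      _ ≤ ∫ s in Set.Ioi a, c₂ * M * (a^δ * s^(-1-δ)) := by
          apply setIntegral_mono_set hmaj
          · exact Filter.eventually_of_mem (self_mem_ae_restrict measurableSet_Ioi)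
              (fun s hs => hmajnn s hs)
          · exact HasSubset.Subset.eventuallyLE hSsub
      _ = c₂ * M / δ := hval
      _ = c₂ / δ * M := by ring
  -- lower bound for the integral
  have hIge : M / c₁ ≤ ∫ s in S, F s := by
    have hvol : (volume (Set.Ioc a (2*a))).toReal = a := by
      rw [Real.volume_Ioc, ENNReal.toReal_ofReal (by linarith)]
      ring
    calc M / c₁ = M / (c₁ * a) * (volume (Set.Ioc a (2*a))).toReal := by
          rw [hvol]; field_simp
          all_goals ring
      _ ≤ ∫ s in Set.Ioc a (2*a), F s := by
          apply setIntegral_ge_of_const_le_real measurableSet_Ioc measure_Ioc_lt_top.ne hlow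
            (hFint.mono_set hSsup)
      _ ≤ ∫ s in S, F s := by
          apply setIntegral_mono_set hFint
          · exact Filter.eventually_of_mem (self_mem_ae_restrict hSmeas)
              (fun s hs => hFnn s (hSsub hs))
          · exact HasSubset.Subset.eventuallyLE hSsup
  constructor
  · have hCc1 : c₁ ≤ max 1 (max c₁ (c₂/δ)) := le_trans (le_max_left _ _) (le_max_right _ _)
    have hCpos : (0:ℝ) < max 1 (max c₁ (c₂/δ)) := lt_of_lt_of_le one_pos (le_max_left _ _)
    calc (max 1 (max c₁ (c₂/δ)))⁻¹ * M ≤ c₁⁻¹ * M := by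
          apply mul_le_mul_of_nonneg_right _ hM0
          exact inv_anti₀ hc1pos hCc1
      _ = M / c₁ := by rw [inv_mul_eq_div]
      _ ≤ _ := hIge
  · have hCc2 : c₂/δ ≤ max 1 (max c₁ (c₂/δ)) := le_trans (le_max_right _ _) (le_max_right _ _)
    calc (∫ s in S, F s) ≤ c₂/δ * M := hIle
      _ ≤ max 1 (max c₁ (c₂/δ)) * M := mul_le_mul_of_nonneg_right hCc2 hM0



/-- From `Y ≤ X^p` deduce `Y^{1/p} ≤ X`. -/
lemma rpow_le_root {X Y p : ℝ} (hX : 0 ≤ X) (hY : 0 ≤ Y) (hp : 0 < p) (h : Y ≤ X ^ p) :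
    Y ^ p⁻¹ ≤ X := by
  calc Y ^ p⁻¹ ≤ (X ^ p) ^ p⁻¹ := Real.rpow_le_rpow hY h (by positivity)
    _ = X := by
        rw [← Real.rpow_mul hX, mul_inv_cancel₀ (ne_of_gt hp), Real.rpow_one]

/-- For a fixed pair `(x,y)`, derive the two-sided green tail estimate from the
structural hypotheses. -/
lemma green_pair {E : Type*} [PseudoMetricSpace E] [MeasurableSpace E]
    (m : Measure E) (x y : E) (ν : Measure ℝ)
    (hsupp : ν (Set.Iic 0) = 0) (htail : ∀ r : ℝ, 0 < r → ν (Set.Ioi r) < ⊤)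
    (hinteg : IntegrableOn (fun s => s) (Set.Ioc (0:ℝ) 1) ν)
    (hne : ν (Set.Ioi (0:ℝ)) ≠ 0)
    (h : ℝ → E → E → ℝ) (Φ ΦInv : ℝ → ℝ)
    (d₁ d₂ α₂ cA' β cφ cH2 CV K : ℝ) (Dcap : Set ℝ)
    (ρ : ℝ) (hρ : 0 < ρ)
    (hd₁ : 0 < d₁) (hα₂ : 0 < α₂)
    (hcA' : 0 < cA') (hβnn : 0 ≤ β) (hcφ : 0 < cφ) (hcH2 : 0 < cH2)
    (hCV : 1 ≤ CV) (hK : 1 ≤ K)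
    (hδpos : β < d₁/α₂)
    (hΦmono : StrictMonoOn Φ (Set.Ici 0)) (hΦ0 : Φ 0 = 0)
    (hΦInv : ∀ s : ℝ, 0 < s → 0 < ΦInv s ∧ Φ (ΦInv s) = s)
    (hΦup : ∀ r R : ℝ, 0 < r → r ≤ R → Φ R / Φ r ≤ cA' * (R/r)^α₂)
    (hKbound : ∀ r R : ℝ, 0 < r → 0 < R → Φ R ≤ 2 * Φ r → R ≤ K * r)
    (hmpos : ∀ r : ℝ, 0 < r → 0 < m (Metric.ball x r) ∧ m (Metric.ball x r) < ⊤)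
    (hdoub : ∀ r R : ℝ, 0 < r → r ≤ R → R ∈ Dcap →
      CV⁻¹ * (R/r)^d₁ ≤ vol m x R / vol m x r ∧ vol m x R / vol m x r ≤ CV * (R/r)^d₂)
    (hcapρ : K * ρ ∈ Dcap)
    (hh01 : ∀ t : ℝ, 0 < t → 0 ≤ h t x y ∧ h t x y ≤ 1)
    (hH1 : ∀ s t : ℝ, 0 < s → s ≤ t → h t x y ≤ h s x y)
    (hH2a : h (Φ ρ) x y ≤ cH2 * h (2 * Φ ρ) x y)
    (S : Set ℝ) (hSmeas : MeasurableSet S)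
    (hSsub : S ⊆ Set.Ioi (Φ ρ)) (hSsup : Set.Ioc (Φ ρ) (2 * Φ ρ) ⊆ S)
    (hScap : ∀ s ∈ S, ΦInv s ∈ Dcap)
    (hφscale : ∀ s ∈ S, cφ * (Φ ρ/s)^β * laplaceExp ν (Φ ρ)⁻¹ ≤ laplaceExp ν s⁻¹) :
      (max 1 (max (2 * cH2 * (CV * K^d₂)) (CV * cA'^(d₁/α₂) / cφ / (d₁/α₂ - β))))⁻¹ *
          (h (Φ ρ) x y * (laplaceExp ν (Φ ρ)⁻¹)⁻¹ / vol m x ρ)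
        ≤ (∫ s in S, h s x y / (s * vol m x (ΦInv s) * laplaceExp ν s⁻¹)) ∧
      (∫ s in S, h s x y / (s * vol m x (ΦInv s) * laplaceExp ν s⁻¹))
        ≤ (max 1 (max (2 * cH2 * (CV * K^d₂)) (CV * cA'^(d₁/α₂) / cφ / (d₁/α₂ - β)))) *
          (h (Φ ρ) x y * (laplaceExp ν (Φ ρ)⁻¹)⁻¹ / vol m x ρ) := by
  set a := Φ ρ with haeq
  have ha : 0 < a := by
    rw [haeq, ← hΦ0]
    exact hΦmono (Set.mem_Ici.mpr le_rfl) (Set.mem_Ici.mpr hρ.le) hρ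
  have hK0 : (0:ℝ) < K := lt_of_lt_of_le one_pos hK
  have hVρpos : 0 < vol m x ρ :=
    ENNReal.toReal_pos (ne_of_gt (hmpos ρ hρ).1) (ne_of_lt (hmpos ρ hρ).2)
  have hvolmono : ∀ r R : ℝ, 0 < R → r ≤ R → vol m x r ≤ vol m x R := by
    intro r R hR hrR
    exact ENNReal.toReal_mono (ne_of_lt (hmpos R hR).2)
      (measure_mono (Metric.ball_subset_ball hrR))
  have hΦInvmono : ∀ s t : ℝ, 0 < s → s ≤ t → ΦInv s ≤ ΦInv t := by
    intro s t hs hst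
    by_contra hc
    push_neg at hc
    have h1 := hΦmono (Set.mem_Ici.mpr (hΦInv t (hs.trans_le hst)).1.le)
      (Set.mem_Ici.mpr (hΦInv s hs).1.le) hc
    rw [(hΦInv t (hs.trans_le hst)).2, (hΦInv s hs).2] at h1
    linarith
  have hr_gt : ∀ s : ℝ, a < s → ρ ≤ ΦInv s := by
    intro s hs
    by_contra hc
    push_neg at hc
    have h1 := hΦmono (Set.mem_Ici.mpr (hΦInv s (ha.trans hs)).1.le)
      (Set.mem_Ici.mpr hρ.le) hc
    rw [(hΦInv s (ha.trans hs)).2, ← haeq] at h1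
    linarith
  apply green_core m x y ν h ΦInv a ρ S hSmeas ha hSsub hSsup
    (d₁/α₂) β (d₁/α₂ - β) CV (CV * K^d₂) cA' cφ cH2
    (by positivity) hβnn rfl (by linarith) hCV
    (by have := Real.rpow_pos_of_pos hK0 d₂; positivity) hcA' hcφ hcH2 hVρpos
  · exact laplace_pos hsupp htail hinteg hne (inv_pos.mpr ha)
  · intro s hs
    exact laplace_mono hsupp htail hinteg (inv_pos.mpr (ha.trans hs))
      (inv_anti₀ ha hs.le)
  · intro s hs
    exact laplace_pos hsupp htail hinteg hne (inv_pos.mpr (ha.trans hs))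
  · intro s hs
    have h1 := hΦInv s (ha.trans hs)
    exact ENNReal.toReal_pos (ne_of_gt (hmpos _ h1.1).1) (ne_of_lt (hmpos _ h1.1).2)
  · exact fun s hs => (hh01 s (ha.trans hs)).1
  · exact fun s hs => hH1 a s ha hs.le
  · exact (hh01 a ha).1
  · exact hH2a
  · exact fun s hs1 hs2 => hH1 s (2*a) (ha.trans hs1) hs2
  · -- hVolUp
    intro s hs
    have hs0 : 0 < s := ha.trans hs.1
    obtain ⟨hrpos, hreq⟩ := hΦInv s hs0
    have hle : ΦInv s ≤ K * ρ := by
      apply hKbound ρ (ΦInv s) hρ hrpos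
      rw [hreq, ← haeq]; exact hs.2
    have h1 : vol m x (ΦInv s) ≤ vol m x (K * ρ) :=
      hvolmono _ _ (by positivity) hle
    have h2 := (hdoub ρ (K*ρ) hρ (le_mul_of_one_le_left hρ.le hK) hcapρ).2
    rw [show K * ρ / ρ = K by field_simp] at h2
    rw [div_le_iff₀ hVρpos] at h2
    linarith
  · -- hVolLow
    intro s hs
    have hsa : a < s := hSsub hs
    have hs0 : 0 < s := ha.trans hsa
    obtain ⟨hrpos, hreq⟩ := hΦInv s hs0
    have hρr : ρ ≤ ΦInv s := hr_gt s hsa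
    set X := ΦInv s / ρ with hX
    have hX1 : (0:ℝ) < X := by positivity
    have h1 := (hdoub ρ (ΦInv s) hρ hρr (hScap s hs)).1
    rw [le_div_iff₀ hVρpos] at h1
    refine le_trans ?_ h1
    apply mul_le_mul_of_nonneg_right _ hVρpos.le
    apply mul_le_mul_of_nonneg_left _ (by positivity : (0:ℝ) ≤ CV⁻¹)
    have h2 : s / a ≤ cA' * X^α₂ := by
      have h3 := hΦup ρ (ΦInv s) hρ hρr
      rw [hreq, ← haeq] at h3
      exact h3
    have h3 : s/(cA'*a) ≤ X^α₂ := by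
      rw [div_mul_eq_div_div_swap, div_le_iff₀ hcA']
      calc s/a ≤ cA' * X^α₂ := h2
        _ = X^α₂ * cA' := by ring
    have h4 : (s/(cA'*a))^(α₂⁻¹) ≤ X :=
      rpow_le_root (le_of_lt hX1) (by positivity) hα₂ h3
    calc (s/(cA'*a))^(d₁/α₂) = ((s/(cA'*a))^(α₂⁻¹))^d₁ := by
          rw [← Real.rpow_mul (by positivity : (0:ℝ) ≤ s/(cA'*a))]
          congr 1
          field_simp
      _ ≤ X^d₁ := Real.rpow_le_rpow (Real.rpow_nonneg (by positivity) _) h4 hd₁.le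
  · exact hφscale
  · -- measurability via monotone surrogates
    have g1anti : Antitone (fun s : ℝ => h (max s a) x y) := by
      intro s t hst
      exact hH1 (max s a) (max t a) (lt_of_lt_of_le ha (le_max_right _ _))
        (max_le_max hst le_rfl)
    have g2mono : Monotone (fun s : ℝ => vol m x (ΦInv (max s a))) := by
      intro s t hst
      apply hvolmono
      · exact (hΦInv _ (lt_of_lt_of_le ha (le_max_right t a))).1
      · exact hΦInvmono _ _ (lt_of_lt_of_le ha (le_max_right s a)) (max_le_max hst le_rfl)
    have g3anti : Antitone (fun s : ℝ => laplaceExp ν ((max s a)⁻¹)) := by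
      intro s t hst
      exact laplace_mono hsupp htail hinteg
        (inv_pos.mpr (lt_of_lt_of_le ha (le_max_right t a)))
        (inv_anti₀ (lt_of_lt_of_le ha (le_max_right s a)) (max_le_max hst le_rfl))
    have Gmeas : Measurable (fun s : ℝ =>
        h (max s a) x y / (s * vol m x (ΦInv (max s a)) * laplaceExp ν ((max s a)⁻¹))) :=
      (g1anti.measurable).div ((measurable_id.mul g2mono.measurable).mul g3anti.measurable)
    apply (Gmeas.aestronglyMeasurable.restrict).congr
    filter_upwards [self_mem_ae_restrict hSmeas] with s hs
    have hmax : max s a = s := max_eq_left (le_of_lt (hSsub hs))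
    simp only [hmax]



lemma poly_tail_pos {ν : Measure ℝ} {R₁ : ℝ≥0∞} {cw cw' β₁ β₂ : ℝ}
    (hcw : 0 < cw) (hPoly : PolyCond ν R₁ cw cw' β₁ β₂)
    {R : ℝ} (hR : 0 < R) (hR₁ : ENNReal.ofReal R < R₁) : 0 < levyTail ν R := by
  rcases (hPoly R R hR le_rfl hR₁).1.lt_or_eq with h | h
  · by_contra hc
    push_neg at hc
    have h0 : levyTail ν R = 0 := le_antisymm hc ENNReal.toReal_nonneg
    rw [h0] at h
    simp only [div_zero] at h
    have : (0:ℝ) < cw * (R/R)^β₁ := by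
      have : R/R = 1 := div_self (ne_of_gt hR)
      rw [this, Real.one_rpow]
      linarith
    linarith
  · by_contra hc
    push_neg at hc
    have h0 : levyTail ν R = 0 := le_antisymm hc ENNReal.toReal_nonneg
    rw [h0] at h
    simp only [div_zero] at h
    have : R/R = 1 := div_self (ne_of_gt hR)
    rw [this, Real.one_rpow] at h
    nlinarith

/-- Scaling of the Laplace exponent with exponent `min β₂ 1`. -/
lemma phi_scaling {ν : Measure ℝ} (hsupp : ν (Set.Iic 0) = 0)
    (htail : ∀ r : ℝ, 0 < r → ν (Set.Ioi r) < ⊤)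
    (hinteg : IntegrableOn (fun s => s) (Set.Ioc (0:ℝ) 1) ν)
    (hne : ν (Set.Ioi (0:ℝ)) ≠ 0)
    {R₁ : ℝ≥0∞} {cw cw' β₁ β₂ : ℝ}
    (hcw : 0 < cw) (hcw' : 0 < cw') (hβ₁ : 0 < β₁) (hβ : β₁ ≤ β₂)
    (hPoly : PolyCond ν R₁ cw cw' β₁ β₂) :
    ∃ cφ : ℝ, 0 < cφ ∧ ∀ a s : ℝ, 0 < a → a ≤ s → ENNReal.ofReal s < R₁ →
      cφ * (a/s)^(min β₂ 1) * laplaceExp ν a⁻¹ ≤ laplaceExp ν s⁻¹ := by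
  have hβ₂ : 0 < β₂ := lt_of_lt_of_le hβ₁ hβ
  rcases le_or_gt 1 β₂ with hβcase | hβcase
  · -- β₂ ≥ 1 : use that φ(λ)/λ is non-increasing
    refine ⟨1, one_pos, ?_⟩
    intro a s ha has hsR₁
    have hs0 : 0 < s := lt_of_lt_of_le ha has
    rw [min_eq_right hβcase, Real.rpow_one]
    have hsl := laplace_slope hsupp htail hinteg (inv_pos.mpr hs0)
      (inv_anti₀ ha has)
    -- s⁻¹ * φ(a⁻¹) ≤ a⁻¹ * φ(s⁻¹)
    have := mul_le_mul_of_nonneg_left hsl ha.le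
    rw [← mul_assoc, ← mul_assoc, mul_inv_cancel₀ (ne_of_gt ha), one_mul] at this
    calc 1 * (a/s) * laplaceExp ν a⁻¹ = a * (s⁻¹ * laplaceExp ν a⁻¹) := by
          rw [div_eq_mul_inv]; ring
      _ = a * s⁻¹ * laplaceExp ν a⁻¹ := by ring
      _ ≤ laplaceExp ν s⁻¹ := this
  · -- β₂ < 1 : use the tail comparison
    have he1 : (0:ℝ) < 1 - Real.exp (-1) := by
      have : Real.exp (-1) < Real.exp 0 := Real.exp_lt_exp.mpr (by norm_num)
      rw [Real.exp_zero] at this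
      linarith
    have hCφ : (0:ℝ) < 1 + cw'/(1-β₂) := by
      have : (0:ℝ) < cw'/(1-β₂) := by
        apply div_pos hcw'
        linarith
      linarith
    refine ⟨(1 - Real.exp (-1)) / (cw' * (1 + cw'/(1-β₂))), by positivity, ?_⟩
    intro a s ha has hsR₁
    have hs0 : 0 < s := lt_of_lt_of_le ha has
    have haR₁ : ENNReal.ofReal a < R₁ :=
      lt_of_le_of_lt (ENNReal.ofReal_le_ofReal has) hsR₁
    have hwa : 0 < levyTail ν a := poly_tail_pos hcw hPoly ha haR₁
    have hws : 0 < levyTail ν s := poly_tail_pos hcw hPoly hs0 hsR₁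
    rw [min_eq_left hβcase.le]
    -- hard bound at a
    have hhard : laplaceExp ν a⁻¹ ≤ (1 + cw'/(1-β₂)) * levyTail ν a := by
      apply laplace_le_tail hsupp htail hinteg ha hβ₂ hβcase hcw'
      intro t ht hta
      have := (hPoly t a ht hta haR₁).2
      rw [div_le_iff₀ hwa] at this
      calc levyTail ν t ≤ cw' * (a/t)^β₂ * levyTail ν a := by linarith
        _ = cw' * (a/t)^β₂ * levyTail ν a := rfl
    -- Poly between a and s
    have hwas : levyTail ν a ≤ cw' * (s/a)^β₂ * levyTail ν s := by
      have := (hPoly a s ha has hsR₁).2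
      rw [div_le_iff₀ hws] at this
      linarith
    -- easy bound at s
    have heasy : (1 - Real.exp (-1)) * levyTail ν s ≤ laplaceExp ν s⁻¹ :=
      tail_le_laplace hsupp htail hinteg hs0
    have hprod : (a/s)^β₂ * (s/a)^β₂ = 1 := by
      rw [← Real.mul_rpow (by positivity) (by positivity),
        show a/s * (s/a) = 1 by field_simp, Real.one_rpow]
    have hts : (0:ℝ) < (a/s)^β₂ := Real.rpow_pos_of_pos (by positivity) _
    have hst : (0:ℝ) < (s/a)^β₂ := Real.rpow_pos_of_pos (by positivity) _
    calc (1 - Real.exp (-1)) / (cw' * (1 + cw'/(1-β₂))) * (a/s)^β₂ * laplaceExp ν a⁻¹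
        ≤ (1 - Real.exp (-1)) / (cw' * (1 + cw'/(1-β₂))) * (a/s)^β₂ *
            ((1 + cw'/(1-β₂)) * levyTail ν a) := by
          apply mul_le_mul_of_nonneg_left hhard (by positivity)
      _ ≤ (1 - Real.exp (-1)) / (cw' * (1 + cw'/(1-β₂))) * (a/s)^β₂ *
            ((1 + cw'/(1-β₂)) * (cw' * (s/a)^β₂ * levyTail ν s)) := by
          apply mul_le_mul_of_nonneg_left _ (by positivity)
          apply mul_le_mul_of_nonneg_left hwas (le_of_lt hCφ)
      _ = (1 - Real.exp (-1)) * ((a/s)^β₂ * (s/a)^β₂) * levyTail ν s := by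
          field_simp
      _ = (1 - Real.exp (-1)) * levyTail ν s := by rw [hprod]; ring
      _ ≤ laplaceExp ν s⁻¹ := heasy

lemma rpow_root_ge {X Y p : ℝ} (hX : 0 ≤ X) (hp : 0 < p) (h : X ^ p ≤ Y) :
    X ≤ Y ^ p⁻¹ := by
  calc X = (X ^ p) ^ p⁻¹ := by
        rw [← Real.rpow_mul hX, mul_inv_cancel₀ (ne_of_gt hp), Real.rpow_one]
    _ ≤ Y ^ p⁻¹ := Real.rpow_le_rpow (Real.rpow_nonneg hX p) h (by positivity)



lemma vd_cap {E : Type*} [PseudoMetricSpace E] [MeasurableSpace E] (m : Measure E)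
    (R_E : ℝ≥0∞) (d₁ d₂ : ℝ) (hVD : VolDoubling m R_E d₁ d₂) (hRE : 0 < R_E) (S₀ : ℝ) :
    ∃ CV : ℝ, 1 ≤ CV ∧ ∀ (x : E) (r R : ℝ), 0 < r → r ≤ R → R ≤ S₀ →
      CV⁻¹ * (R/r)^d₁ ≤ vol m x R / vol m x r ∧
        vol m x R / vol m x r ≤ CV * (R/r)^d₂ := by
  rcases eq_or_ne R_E ⊤ with htop | htop
  · obtain ⟨CV, h1, h2⟩ := hVD 1 le_rfl
    refine ⟨CV, h1, fun x r R hr hrR _ => h2 x r R hr hrR ?_⟩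
    rw [htop, ENNReal.ofReal_one, one_mul]
    exact ENNReal.ofReal_lt_top
  · have ht : 0 < R_E.toReal := ENNReal.toReal_pos (ne_of_gt hRE) htop
    set A := max 1 ((|S₀|+1)/R_E.toReal) with hA
    have hA1 : (1:ℝ) ≤ A := le_max_left _ _
    obtain ⟨CV, h1, h2⟩ := hVD A hA1
    refine ⟨CV, h1, fun x r R hr hrR hRS => h2 x r R hr hrR ?_⟩
    have hAt : |S₀| + 1 ≤ A * R_E.toReal := by
      rw [← div_le_iff₀ ht]
      exact le_max_right _ _
    have he : ENNReal.ofReal A * R_E = ENNReal.ofReal (A * R_E.toReal) := by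
      conv_lhs => rw [← ENNReal.ofReal_toReal htop]
      rw [← ENNReal.ofReal_mul (le_trans zero_le_one hA1)]
    rw [he]
    rw [ENNReal.ofReal_lt_ofReal_iff (by nlinarith [abs_nonneg S₀])]
    have : R ≤ |S₀| := le_trans hRS (le_abs_self _)
    linarith


/-- Lemma 5.4(i): if d₁ > α₂(β₂ ∧ 1), then the tail part G̃_D of the Green function
estimate is comparable to h(Φ(ρ(x,y)),x,y) ψ(ρ(x,y))/V(x,ρ(x,y)), under either
(Poly-R₁) + HK^h_B or (Poly-∞) + HK^h_U (the upper limit 2Φ(diam D) being ∞ for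
unbounded D). -/
theorem green_tail_estimate_high_dimension
    {E : Type*} [MetricSpace E] [MeasurableSpace E] [BorelSpace E] [ProperSpace E]
    [TopologicalSpace.SeparableSpace E]
    (m : Measure E) (R_E : ℝ≥0∞) (d₁ d₂ : ℝ)
    (hm : ∀ (x : E) (r : ℝ), 0 < r → 0 < m (Metric.ball x r) ∧ m (Metric.ball x r) < ⊤)
    (hRE : 0 < R_E) (hd₁ : 0 < d₁) (hd : d₁ ≤ d₂) (hVD : VolDoubling m R_E d₁ d₂)
    (D : Set E) (hDopen : IsOpen D) (hDne : D.Nonempty) (hDproper : D ≠ Set.univ)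
    (Φ Ψ : ℝ → ℝ) (cA cA' α₁ α₂ cB cB' α₃ α₄ : ℝ)
    (hΦ0 : Φ 0 = 0) (hΦmono : StrictMonoOn Φ (Set.Ici 0))
    (hΨ0 : Ψ 0 = 0) (hΨmono : StrictMonoOn Ψ (Set.Ici 0))
    (hΦΨ : ∀ r : ℝ, 0 ≤ r → Φ r ≤ Ψ r)
    (hcA : 0 < cA) (hcA' : 0 < cA') (hα₁ : 0 < α₁) (hα₁₂ : α₁ ≤ α₂)
    (hcB : 0 < cB) (hcB' : 0 < cB') (hα₃ : 0 < α₃) (hα₃₄ : α₃ ≤ α₄)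
    (hΦsc : WeakScaling Φ cA cA' α₁ α₂) (hΨsc : WeakScaling Ψ cB cB' α₃ α₄)
    (ΦInv : ℝ → ℝ) (hΦInv : ∀ s : ℝ, 0 < s → 0 < ΦInv s ∧ Φ (ΦInv s) = s)
    (h : ℝ → E → E → ℝ) (cH γ : ℝ) (hcH : 0 < cH) (hγ : 0 ≤ γ)
    (pD : ℝ → E → E → ℝ)
    (hpD_meas : ∀ x y : E, Measurable fun s => pD s x y)
    (hpD_nonneg : ∀ (s : ℝ) (x y : E), 0 ≤ pD s x y)
    (ν : Measure ℝ) (μ : ℝ → Measure ℝ) (hsub : IsSubordinatorLaw ν μ)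
    (φInv : ℝ → ℝ) (hφInv : IsPhiInv ν φInv)
    (R₁ : ℝ≥0∞) (cw cw' β₁ β₂ : ℝ) (hR₁ : 0 < R₁)
    (hcw : 0 < cw) (hcw' : 0 < cw') (hβ₁ : 0 < β₁) (hβ : β₁ ≤ β₂)
    (C₀ cl cexl cu cexu : ℝ) (hC₀ : C₀ = 0 ∨ C₀ = 1)
    (hcl : 0 < cl) (hcexl : 0 < cexl) (hcu : 0 < cu) (hcexu : 0 < cexu)
    (hdim : α₂ * min β₂ 1 < d₁) :
    (BddCaseHyp m D Φ Ψ ΦInv h pD ν R₁ cw cw' β₁ β₂ cH γ C₀ cl cexl cu cexu →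
      ∃ C : ℝ, 1 ≤ C ∧ ∀ x y : E, x ∈ D → y ∈ D → x ≠ y →
        C⁻¹ * (h (Φ (dist x y)) x y * psiFun ν Φ (dist x y) / vol m x (dist x y))
          ≤ (∫ s in Set.Ioc (Φ (dist x y)) (2 * Φ (Metric.diam D)),
              h s x y / (s * vol m x (ΦInv s) * laplaceExp ν (s⁻¹))) ∧
        (∫ s in Set.Ioc (Φ (dist x y)) (2 * Φ (Metric.diam D)),
            h s x y / (s * vol m x (ΦInv s) * laplaceExp ν (s⁻¹))) ≤
          C * (h (Φ (dist x y)) x y * psiFun ν Φ (dist x y) / vol m x (dist x y))) ∧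
    (UnbddCaseHyp m D Ψ ΦInv h pD ν R_E cw cw' β₁ β₂ cH γ C₀ cl cexl cu cexu →
      ∃ C : ℝ, 1 ≤ C ∧ ∀ x y : E, x ∈ D → y ∈ D → x ≠ y →
        C⁻¹ * (h (Φ (dist x y)) x y * psiFun ν Φ (dist x y) / vol m x (dist x y))
          ≤ (∫ s in Set.Ioi (Φ (dist x y)),
              h s x y / (s * vol m x (ΦInv s) * laplaceExp ν (s⁻¹))) ∧
        (∫ s in Set.Ioi (Φ (dist x y)),
            h s x y / (s * vol m x (ΦInv s) * laplaceExp ν (s⁻¹))) ≤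
          C * (h (Φ (dist x y)) x y * psiFun ν Φ (dist x y) / vol m x (dist x y))) := by
  have hsupp := hsub.levy.supp
  have htail := hsub.levy.tail_fin
  have hinteg := hsub.levy.integ
  have hα₂ : 0 < α₂ := lt_of_lt_of_le hα₁ hα₁₂
  have hne : ν (Set.Ioi (0:ℝ)) ≠ 0 := by
    intro hc
    obtain ⟨hpos1, heq1⟩ := hφInv 1 one_pos
    have hu : ν Set.univ = 0 := by
      have h1 := measure_union_le (μ := ν) (Set.Iic 0) (Set.Ioi 0)
      rw [Set.Iic_union_Ioi] at h1
      rw [hsupp, hc, add_zero] at h1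
      exact le_antisymm h1 zero_le
    have hν0 : ν = 0 := Measure.measure_univ_eq_zero.mp hu
    rw [hν0] at heq1
    simp [laplaceExp] at heq1
  have hΦpos : ∀ r : ℝ, 0 < r → 0 < Φ r := by
    intro r hr
    rw [← hΦ0]
    exact hΦmono (Set.mem_Ici.mpr le_rfl) (Set.mem_Ici.mpr hr.le) hr
  set K := (2/cA)^(α₁⁻¹) with hKdef
  have hcA1 : cA ≤ 1 := by
    have h1 := (hΦsc 1 1 one_pos le_rfl).1
    rw [div_self (ne_of_gt (hΦpos 1 one_pos))] at h1
    simpa using h1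
  have hK1 : (1:ℝ) ≤ K := by
    have h2 : (1:ℝ) ≤ 2/cA := by rw [le_div_iff₀ hcA]; linarith
    calc (1:ℝ) = 1^(α₁⁻¹) := (Real.one_rpow _).symm
      _ ≤ (2/cA)^(α₁⁻¹) := Real.rpow_le_rpow zero_le_one h2 (by positivity)
  have hKbound : ∀ r R : ℝ, 0 < r → 0 < R → Φ R ≤ 2*Φ r → R ≤ K * r := by
    intro r R hr hR hle
    rcases le_or_gt R r with hc | hc
    · exact le_trans hc (le_mul_of_one_le_left hr.le hK1)
    · have hΦr := hΦpos r hr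
      have h1 := (hΦsc r R hr hc.le).1
      have h2 : cA * (R/r)^α₁ ≤ 2 := by
        refine le_trans h1 ?_
        rw [div_le_iff₀ hΦr]
        linarith
      have h3 : (R/r)^α₁ ≤ 2/cA := by
        rw [le_div_iff₀ hcA]
        nlinarith
      have h4 : R/r ≤ K := by
        rw [hKdef]
        exact rpow_root_ge (by positivity) hα₁ h3
      calc R = (R/r)*r := by field_simp
        _ ≤ K*r := mul_le_mul_of_nonneg_right h4 hr.le
  have hΦup : ∀ r R : ℝ, 0 < r → r ≤ R → Φ R / Φ r ≤ cA' * (R/r)^α₂ :=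
    fun r R hr hrR => (hΦsc r R hr hrR).2
  have hβ₂pos : 0 < β₂ := lt_of_lt_of_le hβ₁ hβ
  have hβnn : 0 ≤ min β₂ 1 := le_min hβ₂pos.le zero_le_one
  have hδpos : min β₂ 1 < d₁/α₂ := by
    rw [lt_div_iff₀ hα₂]
    calc min β₂ 1 * α₂ = α₂ * min β₂ 1 := by ring
      _ < d₁ := hdim
  have hcH2pos : (0:ℝ) < cH * 2^γ := by
    have := Real.rpow_pos_of_pos (by norm_num : (0:ℝ) < 2) γ
    positivity
  -- boundary function pointwise facts, shared
  constructor
  · -- bounded case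
    rintro ⟨hPoly, hDbdd, hR1diam, ⟨hIcc, hH1, hH2⟩, -, -⟩
    obtain ⟨cφ, hcφ0, hφscaleAll⟩ := phi_scaling hsupp htail hinteg hne hcw hcw' hβ₁ hβ hPoly
    have hdD0 : 0 ≤ Metric.diam D := Metric.diam_nonneg
    obtain ⟨CV, hCV1, hacc⟩ := vd_cap m R_E d₁ d₂ hVD hRE (K * Metric.diam D + 1)
    refine ⟨max 1 (max (2 * (cH * 2^γ) * (CV * K^d₂))
      (CV * cA'^(d₁/α₂) / cφ / (d₁/α₂ - min β₂ 1))), le_max_left _ _, ?_⟩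
    intro x y hx hy hxy
    have hρ : 0 < dist x y := dist_pos.mpr hxy
    have hρd : dist x y ≤ Metric.diam D := Metric.dist_le_diam_of_mem hDbdd hx hy
    have hdDpos : 0 < Metric.diam D := lt_of_lt_of_le hρ hρd
    have ha : 0 < Φ (dist x y) := hΦpos _ hρ
    have hΦdpos : 0 < Φ (Metric.diam D) := hΦpos _ hdDpos
    have hΦρd : Φ (dist x y) ≤ Φ (Metric.diam D) := by
      rcases hρd.lt_or_eq with h' | h'
      · exact (hΦmono (Set.mem_Ici.mpr hρ.le) (Set.mem_Ici.mpr hdD0) h').le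
      · rw [h']
    have hH2a : h (Φ (dist x y)) x y ≤ cH * 2^γ * h (2 * Φ (dist x y)) x y := by
      have hcond : ENNReal.ofReal (2 * Φ (dist x y))
          < ENNReal.ofReal (4 * Φ (Metric.diam D) + 1) := by
        rw [ENNReal.ofReal_lt_ofReal_iff (by linarith)]
        linarith
      have h1 := hH2 x y hx hy (Φ (dist x y)) (2 * Φ (dist x y)) ha (by linarith) hcond
      have h2 : (2 * Φ (dist x y))^γ = 2^γ * (Φ (dist x y))^γ :=
        Real.mul_rpow (by norm_num) ha.le
      rw [h2] at h1
      have h3 : (0:ℝ) < (Φ (dist x y))^γ := Real.rpow_pos_of_pos ha γ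
      have h4 : (Φ (dist x y))^γ * h (Φ (dist x y)) x y
          ≤ (Φ (dist x y))^γ * (cH * 2^γ * h (2 * Φ (dist x y)) x y) :=
        le_trans h1 (le_of_eq (by ring))
      exact le_of_mul_le_mul_left h4 h3
    have key := green_pair m x y ν hsupp htail hinteg hne h Φ ΦInv
      d₁ d₂ α₂ cA' (min β₂ 1) cφ (cH * 2^γ) CV K
      (Set.Iic (K * Metric.diam D + 1)) (dist x y) hρ hd₁ hα₂ hcA' hβnn hcφ0 hcH2pos
      hCV1 hK1 hδpos hΦmono hΦ0 hΦInv hΦup hKbound (fun r hr => hm x r hr)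
      (fun r R hr hrR hcap => hacc x r R hr hrR hcap)
      (by
        simp only [Set.mem_Iic]
        nlinarith)
      (fun t ht => ⟨(hIcc t x y ht hx hy).1, (hIcc t x y ht hx hy).2⟩)
      (fun s t hs hst => hH1 x y hx hy s t hs hst)
      hH2a
      (Set.Ioc (Φ (dist x y)) (2 * Φ (Metric.diam D))) measurableSet_Ioc
      (fun s hs => hs.1)
      (Set.Ioc_subset_Ioc_right (by linarith))
      (fun s hs => by
        have hs0 : 0 < s := lt_trans ha hs.1
        obtain ⟨hp, he⟩ := hΦInv s hs0
        have hKd : ΦInv s ≤ K * Metric.diam D := by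
          apply hKbound (Metric.diam D) (ΦInv s) hdDpos hp
          rw [he]
          exact hs.2
        simp only [Set.mem_Iic]
        linarith)
      (fun s hs => hφscaleAll (Φ (dist x y)) s ha (le_of_lt hs.1) (by
        refine lt_of_le_of_lt (ENNReal.ofReal_le_ofReal ?_) hR1diam
        calc s ≤ 2 * Φ (Metric.diam D) := hs.2
          _ ≤ 8 * Φ (Metric.diam D) := by linarith))
    simpa only [psiFun] using key
  · -- unbounded case
    rintro ⟨hPoly, hREtop, ⟨hIcc, hH1, hH2⟩, -⟩
    obtain ⟨cφ, hcφ0, hφscaleAll⟩ := phi_scaling hsupp htail hinteg hne hcw hcw' hβ₁ hβ hPoly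
    obtain ⟨CV, hCV1, hacc⟩ := hVD 1 le_rfl
    have hacc' : ∀ (x : E) (r R : ℝ), 0 < r → r ≤ R → R ∈ (Set.univ : Set ℝ) →
        CV⁻¹ * (R/r)^d₁ ≤ vol m x R / vol m x r ∧
          vol m x R / vol m x r ≤ CV * (R/r)^d₂ := by
      intro x r R hr hrR _
      apply hacc x r R hr hrR
      rw [hREtop, ENNReal.ofReal_one, one_mul]
      exact ENNReal.ofReal_lt_top
    refine ⟨max 1 (max (2 * (cH * 2^γ) * (CV * K^d₂))
      (CV * cA'^(d₁/α₂) / cφ / (d₁/α₂ - min β₂ 1))), le_max_left _ _, ?_⟩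
    intro x y hx hy hxy
    have hρ : 0 < dist x y := dist_pos.mpr hxy
    have ha : 0 < Φ (dist x y) := hΦpos _ hρ
    have hH2a : h (Φ (dist x y)) x y ≤ cH * 2^γ * h (2 * Φ (dist x y)) x y := by
      have h1 := hH2 x y hx hy (Φ (dist x y)) (2 * Φ (dist x y)) ha (by linarith)
        (by exact ENNReal.ofReal_lt_top)
      have h2 : (2 * Φ (dist x y))^γ = 2^γ * (Φ (dist x y))^γ :=
        Real.mul_rpow (by norm_num) ha.le
      rw [h2] at h1
      have h3 : (0:ℝ) < (Φ (dist x y))^γ := Real.rpow_pos_of_pos ha γ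
      have h4 : (Φ (dist x y))^γ * h (Φ (dist x y)) x y
          ≤ (Φ (dist x y))^γ * (cH * 2^γ * h (2 * Φ (dist x y)) x y) :=
        le_trans h1 (le_of_eq (by ring))
      exact le_of_mul_le_mul_left h4 h3
    have key := green_pair m x y ν hsupp htail hinteg hne h Φ ΦInv
      d₁ d₂ α₂ cA' (min β₂ 1) cφ (cH * 2^γ) CV K
      (Set.univ : Set ℝ) (dist x y) hρ hd₁ hα₂ hcA' hβnn hcφ0 hcH2pos
      hCV1 hK1 hδpos hΦmono hΦ0 hΦInv hΦup hKbound (fun r hr => hm x r hr)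
      (fun r R hr hrR hcap => hacc' x r R hr hrR hcap)
      (Set.mem_univ _)
      (fun t ht => ⟨(hIcc t x y ht hx hy).1, (hIcc t x y ht hx hy).2⟩)
      (fun s t hs hst => hH1 x y hx hy s t hs hst)
      hH2a
      (Set.Ioi (Φ (dist x y))) measurableSet_Ioi
      (fun s hs => hs)
      Set.Ioc_subset_Ioi_self
      (fun s _ => Set.mem_univ _)
      (fun s hs => hφscaleAll (Φ (dist x y)) s ha (le_of_lt hs) ENNReal.ofReal_lt_top)
    simpa only [psiFun] using key
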